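/- arXiv:1108.1847 — 3 statements merged into one kernel-verified Lean document; each statement's English description precedes it below -/
import Mathlib

section
/- Let S, B, A be polynomials in the variables t = (t_1, ..., t_m) and x, with rational coefficients, and let d = deg_x S ≥ 1. Assume S and B are coprime as polynomials in x over the field ℚ(t_1, ..., t_m). Then there exist a nonzero polynomial Q ∈ ℤ[t_1, ..., t_m] and a polynomial U ∈ ℤ[t_1, ..., t_m, x] with deg_x U ≤ d − 1, and a nonzero integer c, such that for every point (τ, ξ) ∈ ℂ^m × ℂ satisfying S(τ, ξ) = 0, B(τ, ξ) ≠ 0 and Q(τ) ≠ 0, one has c · A(τ, ξ) / B(τ, ξ) = U(τ, ξ) / Q(τ). -/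
set_option maxHeartbeats 1000000

open Polynomial

/-- Clear rational denominators of a multivariate polynomial. -/
lemma clearMv {m : ℕ} (p : MvPolynomial (Fin m) ℚ) :
    ∃ n : ℤ, n ≠ 0 ∧ ∃ q : MvPolynomial (Fin m) ℤ,
      MvPolynomial.map (Int.castRingHom ℚ) q = n • p := by
  induction p using MvPolynomial.induction_on with
  | C a =>
      refine ⟨a.den, by exact_mod_cast a.pos.ne', MvPolynomial.C a.num, ?_⟩
      rw [MvPolynomial.map_C]
      rw [zsmul_eq_mul, ← map_intCast (MvPolynomial.C : ℚ →+* _) (a.den : ℤ),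
        ← map_mul]
      congr 1
      push_cast
      rw [mul_comm]
      exact_mod_cast (Rat.mul_den_eq_num a).symm
  | add p q hp hq =>
      obtain ⟨n1, hn1, q1, h1⟩ := hp
      obtain ⟨n2, hn2, q2, h2⟩ := hq
      refine ⟨n1 * n2, mul_ne_zero hn1 hn2, n2 • q1 + n1 • q2, ?_⟩
      rw [map_add, map_zsmul, map_zsmul, h1, h2, smul_add, smul_smul, smul_smul,
        mul_comm n2 n1]
  | mul_X p i hp =>
      obtain ⟨n, hn, q, h⟩ := hp
      exact ⟨n, hn, q * MvPolynomial.X i, by rw [map_mul, h, MvPolynomial.map_X,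
        smul_mul_assoc]⟩

/-- Clear rational denominators of a polynomial with multivariate polynomial coefficients. -/
lemma clearPoly {m : ℕ} (p : Polynomial (MvPolynomial (Fin m) ℚ)) :
    ∃ n : ℤ, n ≠ 0 ∧ ∃ q : Polynomial (MvPolynomial (Fin m) ℤ),
      q.map (MvPolynomial.map (Int.castRingHom ℚ)) = n • p := by
  induction p using Polynomial.induction_on' with
  | add p q hp hq =>
      obtain ⟨n1, hn1, q1, h1⟩ := hp
      obtain ⟨n2, hn2, q2, h2⟩ := hq
      refine ⟨n1 * n2, mul_ne_zero hn1 hn2, n2 • q1 + n1 • q2, ?_⟩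
      rw [← Polynomial.coe_mapRingHom, map_add, map_zsmul, map_zsmul,
        Polynomial.coe_mapRingHom, h1, h2, smul_add, smul_smul, smul_smul, mul_comm n2 n1]
  | monomial k a =>
      obtain ⟨n, hn, q, h⟩ := clearMv a
      refine ⟨n, hn, Polynomial.monomial k q, ?_⟩
      rw [Polynomial.map_monomial (f := MvPolynomial.map (Int.castRingHom ℚ)), h, Polynomial.smul_monomial]

lemma natDegree_zsmul_le {R : Type*} [CommRing R] (n : ℤ) (p : Polynomial R) :
    (n • p).natDegree ≤ p.natDegree := by
  rw [zsmul_eq_mul]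
  exact (Polynomial.natDegree_mul_le).trans (by simp [Polynomial.natDegree_intCast])



/-- Evaluation of a polynomial in `x` with coefficients in `ℚ[t_1, …, t_m]` at a point
`(τ, ξ) ∈ ℂ^m × ℂ`. -/
noncomputable def evalRat {m : ℕ} (τ : Fin m → ℂ) (ξ : ℂ)
    (p : Polynomial (MvPolynomial (Fin m) ℚ)) : ℂ :=
  Polynomial.eval₂ (MvPolynomial.aeval τ : MvPolynomial (Fin m) ℚ →ₐ[ℚ] ℂ).toRingHom ξ p

/-- Evaluation of a polynomial in `x` with coefficients in `ℤ[t_1, …, t_m]` at a point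
`(τ, ξ) ∈ ℂ^m × ℂ`. -/
noncomputable def evalInt {m : ℕ} (τ : Fin m → ℂ) (ξ : ℂ)
    (p : Polynomial (MvPolynomial (Fin m) ℤ)) : ℂ :=
  Polynomial.eval₂ (MvPolynomial.aeval τ : MvPolynomial (Fin m) ℤ →ₐ[ℤ] ℂ).toRingHom ξ p

/-- elimination lemma: if `S, B` are coprime as polynomials in `x` over
`ℚ(t_1, …, t_m)` and `d = deg_x S ≥ 1`, then there are `Q ∈ ℤ[t]`, `U ∈ ℤ[t, x]` with
`deg_x U ≤ d - 1`, and `0 ≠ c ∈ ℤ` such that `c·A/B = U/Q` at every point of the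
hypersurface `{S = 0}` where `B` and `Q` do not vanish. -/
theorem stmt0 (m : ℕ) (S B A : Polynomial (MvPolynomial (Fin m) ℚ))
    (d : ℕ) (hd : d = S.natDegree) (hd1 : 1 ≤ d)
    (hcop : IsCoprime
      (S.map (algebraMap (MvPolynomial (Fin m) ℚ) (FractionRing (MvPolynomial (Fin m) ℚ))))
      (B.map (algebraMap (MvPolynomial (Fin m) ℚ) (FractionRing (MvPolynomial (Fin m) ℚ))))) :
    ∃ Q : MvPolynomial (Fin m) ℤ, Q ≠ 0 ∧
    ∃ U : Polynomial (MvPolynomial (Fin m) ℤ), U.natDegree ≤ d - 1 ∧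
    ∃ c : ℤ, c ≠ 0 ∧
      ∀ (τ : Fin m → ℂ) (ξ : ℂ),
        evalRat τ ξ S = 0 → evalRat τ ξ B ≠ 0 → MvPolynomial.aeval τ Q ≠ 0 →
          (c : ℂ) * evalRat τ ξ A / evalRat τ ξ B
            = evalInt τ ξ U / MvPolynomial.aeval τ Q := by
  classical
  set R := MvPolynomial (Fin m) ℚ
  set K := FractionRing R with hK
  have hinj : Function.Injective (algebraMap R K) := IsFractionRing.injective R K
  have hS0 : S ≠ 0 := by
    intro h
    rw [h, Polynomial.natDegree_zero] at hd
    omega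
  set Sk := S.map (algebraMap R K) with hSkdef
  set Bk := B.map (algebraMap R K) with hBkdef
  set Ak := A.map (algebraMap R K) with hAkdef
  have hSk0 : Sk ≠ 0 := by
    simpa [hSkdef, Polynomial.map_eq_zero_iff hinj] using hS0
  have hdegSk : Sk.natDegree = d := by
    rw [hSkdef, Polynomial.natDegree_map_eq_of_injective hinj, hd]
  obtain ⟨u, v, huv⟩ := hcop
  have hmon : (Sk * Polynomial.C (Sk.leadingCoeff)⁻¹).Monic :=
    Polynomial.monic_mul_leadingCoeff_inv hSk0
  set r := (v * Ak) %ₘ (Sk * Polynomial.C (Sk.leadingCoeff)⁻¹) with hrdef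
  -- degree bound on r
  have hrd : r.natDegree ≤ d - 1 := by
    have h1 : r.degree < (Sk * Polynomial.C (Sk.leadingCoeff)⁻¹).degree :=
      Polynomial.degree_modByMonic_lt _ hmon
    rw [Polynomial.degree_mul_leadingCoeff_inv _ hSk0,
      Polynomial.degree_eq_natDegree hSk0, hdegSk] at h1
    rcases eq_or_ne r 0 with h | h
    · simp [h]
    · have := (Polynomial.natDegree_lt_iff_degree_lt h).mpr h1
      omega
  -- key identity over K
  have hkey : r * Bk + Sk * (u * Ak +
      Polynomial.C (Sk.leadingCoeff)⁻¹
        * ((v * Ak) /ₘ (Sk * Polynomial.C (Sk.leadingCoeff)⁻¹)) * Bk) = Ak := by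
    have h1 := Polynomial.modByMonic_add_div (v * Ak) (Sk * Polynomial.C (Sk.leadingCoeff)⁻¹)
    rw [← hrdef] at h1
    linear_combination Bk * h1 + Ak * huv
  set W := u * Ak + Polynomial.C (Sk.leadingCoeff)⁻¹
      * ((v * Ak) /ₘ (Sk * Polynomial.C (Sk.leadingCoeff)⁻¹)) * Bk with hWdef
  -- clear K-denominators
  obtain ⟨br, hbr⟩ := IsLocalization.integerNormalization_map_to_map (nonZeroDivisors R) r
  obtain ⟨bw, hbw⟩ := IsLocalization.integerNormalization_map_to_map (nonZeroDivisors R) W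
  set Ur := IsLocalization.integerNormalization (nonZeroDivisors R) r with hUrdef
  set Ww := IsLocalization.integerNormalization (nonZeroDivisors R) W with hWwdef
  have hsmul : ∀ (a : R) (p : Polynomial K),
      a • p = Polynomial.C (algebraMap R K a) * p := by
    intro a p
    rw [← algebraMap_smul K a p, Polynomial.smul_eq_C_mul]
  -- identity over R
  have hid : (Polynomial.C (↑bw : R) * Ur) * B + S * (Polynomial.C (↑br : R) * Ww)
      = Polynomial.C ((↑br : R) * ↑bw) * A := by
    apply Polynomial.map_injective (algebraMap R K) hinj
    have hbr : Polynomial.map (algebraMap R K) Ur = (↑br : R) • r := hbr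
    have hbw : Polynomial.map (algebraMap R K) Ww = (↑bw : R) • W := hbw
    simp only [Polynomial.map_add, Polynomial.map_mul, Polynomial.map_C, hbr, hbw,
      ← hSkdef, ← hBkdef, ← hAkdef, hsmul, map_mul]
    linear_combination (Polynomial.C (algebraMap R K ↑br)
      * Polynomial.C (algebraMap R K ↑bw)) * hkey
  set U1 := Polynomial.C (↑bw : R) * Ur with hU1def
  set Q0 := (↑br : R) * ↑bw with hQ0def
  have hQ00 : Q0 ≠ 0 :=
    mul_ne_zero (nonZeroDivisors.ne_zero br.2) (nonZeroDivisors.ne_zero bw.2)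
  -- clear ℚ-denominators
  obtain ⟨nU, hnU, Uz, hUz⟩ := clearPoly U1
  obtain ⟨nQ, hnQ, Qz, hQz⟩ := clearMv Q0
  refine ⟨Qz, ?_, nQ • Uz, ?_, nU, hnU, ?_⟩
  · -- Qz ≠ 0
    intro h
    rw [h, map_zero] at hQz
    have : (nQ : ℚ) ≠ 0 := Int.cast_ne_zero.mpr hnQ
    exact hQ00 (by
      have := hQz.symm
      rwa [zsmul_eq_mul, mul_eq_zero, or_iff_right (by
        simpa using hnQ : ((nQ : ℤ) : R) ≠ 0)] at this)
  · -- degree bound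
    have e1 : Uz.natDegree = (nU • U1).natDegree := by
      rw [← hUz, Polynomial.natDegree_map_eq_of_injective
        (MvPolynomial.map_injective _ (Int.cast_injective))]
    have e2 : Ur.natDegree = ((↑br : R) • r).natDegree := by
      rw [← hbr, Polynomial.natDegree_map_eq_of_injective hinj]
    have e3 : ((↑br : R) • r).natDegree ≤ r.natDegree := by
      rw [hsmul]
      exact Polynomial.natDegree_C_mul_le _ _
    calc (nQ • Uz).natDegree ≤ Uz.natDegree := natDegree_zsmul_le _ _
      _ = (nU • U1).natDegree := e1
      _ ≤ U1.natDegree := natDegree_zsmul_le _ _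
      _ ≤ Ur.natDegree := Polynomial.natDegree_C_mul_le _ _
      _ = ((↑br : R) • r).natDegree := e2
      _ ≤ r.natDegree := e3
      _ ≤ d - 1 := hrd
  · -- evaluation
    intro τ ξ hS hB hQ
    set f : MvPolynomial (Fin m) ℚ →+* ℂ :=
      (MvPolynomial.aeval τ : MvPolynomial (Fin m) ℚ →ₐ[ℚ] ℂ).toRingHom with hf
    set g : MvPolynomial (Fin m) ℤ →+* ℂ :=
      (MvPolynomial.aeval τ : MvPolynomial (Fin m) ℤ →ₐ[ℤ] ℂ).toRingHom with hg
    have hcomp : f.comp (MvPolynomial.map (Int.castRingHom ℚ)) = g := by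
      apply MvPolynomial.ringHom_ext <;> intro i <;>
        simp [hf, hg, MvPolynomial.algebraMap_eq]
    have hE := congrArg (Polynomial.eval₂RingHom f ξ) hid
    simp only [map_add, map_mul, Polynomial.coe_eval₂RingHom, Polynomial.eval₂_C] at hE
    have hSz : Polynomial.eval₂ f ξ S = 0 := hS
    rw [hSz, zero_mul, add_zero] at hE
    -- evaluate Uz
    have hUe : Polynomial.eval₂ g ξ Uz = (nU : ℂ) * Polynomial.eval₂ f ξ U1 := by
      have h1 : Polynomial.eval₂ f ξ (Uz.map (MvPolynomial.map (Int.castRingHom ℚ)))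
          = Polynomial.eval₂ g ξ Uz := by
        rw [Polynomial.eval₂_map, hcomp]
      rw [← h1, hUz, ← Polynomial.coe_eval₂RingHom, map_zsmul, zsmul_eq_mul,
        Polynomial.coe_eval₂RingHom]
    have hQe : (MvPolynomial.aeval (R := ℤ) τ Qz : ℂ) = (nQ : ℂ) * f Q0 := by
      have h1 : f (MvPolynomial.map (Int.castRingHom ℚ) Qz)
          = MvPolynomial.aeval (R := ℤ) τ Qz := by
        exact RingHom.congr_fun hcomp Qz
      rw [← h1, hQz, map_zsmul, zsmul_eq_mul]
    have hUfull : evalInt τ ξ (nQ • Uz) = (nQ : ℂ) * Polynomial.eval₂ g ξ Uz := by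
      show Polynomial.eval₂ g ξ (nQ • Uz) = _
      rw [← Polynomial.coe_eval₂RingHom, map_zsmul, zsmul_eq_mul,
        Polynomial.coe_eval₂RingHom]
    have hq0 : f Q0 ≠ 0 := by
      intro h
      apply hQ
      show (MvPolynomial.aeval (R := ℤ) τ Qz : ℂ) = 0
      rw [hQe, h, mul_zero]
    have hnQc : (nQ : ℂ) ≠ 0 := Int.cast_ne_zero.mpr hnQ
    have hBc : Polynomial.eval₂ f ξ B ≠ 0 := hB
    have hQzc : (MvPolynomial.aeval (R := ℤ) τ Qz : ℂ) ≠ 0 := hQ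
    show (nU : ℂ) * Polynomial.eval₂ f ξ A / Polynomial.eval₂ f ξ B
      = Polynomial.eval₂ g ξ (nQ • Uz) / MvPolynomial.aeval τ Qz
    have hfrac : Polynomial.eval₂ f ξ U1 / f Q0
        = Polynomial.eval₂ f ξ A / Polynomial.eval₂ f ξ B := by
      rw [div_eq_div_iff hq0 hBc]
      linear_combination hE
    rw [show Polynomial.eval₂ g ξ (nQ • Uz) = evalInt τ ξ (nQ • Uz) from rfl, hUfull, hQe,
      hUe, mul_div_mul_left _ _ hnQc, mul_div_assoc, mul_div_assoc, hfrac]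
end

section
/- Let λ_1 < λ_2 < ... < λ_n be distinct real numbers and c_1, ..., c_n real numbers, not all zero. Then the function f(t) = Σ_{j=1}^n c_j · t^{λ_j} (defined for t > 0, where t^λ = exp(λ · log t)) has at most n − 1 zeros in the open interval (0, ∞). -/
open Set

lemma rolle_count (g G : ℝ → ℝ) (hg : ∀ t : ℝ, 0 < t → HasDerivAt g (G t) t)
    (hS' : {t : ℝ | 0 < t ∧ G t = 0}.Finite) :
    {t : ℝ | 0 < t ∧ g t = 0}.Finite ∧
    {t : ℝ | 0 < t ∧ g t = 0}.ncard ≤ {t : ℝ | 0 < t ∧ G t = 0}.ncard + 1 := by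
  set S' := {t : ℝ | 0 < t ∧ G t = 0} with hS'def
  set k := S'.ncard with hk
  have key : ∀ T : Finset ℝ, ↑T ⊆ {t : ℝ | 0 < t ∧ g t = 0} → T.card ≤ k + 1 := by
    intro T hT
    by_contra hcon
    push_neg at hcon
    have hm2 : k + 2 ≤ T.card := hcon
    set e := T.orderEmbOfFin (rfl : T.card = T.card) with he
    have hmemS : ∀ i : Fin T.card, 0 < e i ∧ g (e i) = 0 :=
      fun i => hT (T.orderEmbOfFin_mem rfl i)
    have step : ∀ i : Fin (k + 1), ∃ x, (0 < x ∧ G x = 0) ∧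
        e ⟨i.1, by omega⟩ < x ∧ x < e ⟨i.1 + 1, by omega⟩ := by
      intro i
      set a := e ⟨i.1, by omega⟩ with ha'
      set b := e ⟨i.1 + 1, by omega⟩ with hb'
      have hab : a < b := e.strictMono (by simp [Fin.lt_def])
      have ha := hmemS ⟨i.1, by omega⟩
      have hb := hmemS ⟨i.1 + 1, by omega⟩
      have hcont : ContinuousOn g (Set.Icc a b) := fun x hx =>
        ((hg x (lt_of_lt_of_le ha.1 hx.1)).continuousAt).continuousWithinAt
      obtain ⟨x, hx, hGx⟩ := exists_hasDerivAt_eq_zero hab hcont (ha.2.trans hb.2.symm)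
        (fun x hx => hg x (ha.1.trans hx.1))
      exact ⟨x, ⟨ha.1.trans hx.1, hGx⟩, hx.1, hx.2⟩
    choose cF hcF1 hcF2 hcF3 using step
    have hsm : StrictMono cF := by
      intro i j hij
      calc cF i < e ⟨i.1 + 1, by omega⟩ := hcF3 i
        _ ≤ e ⟨j.1, by omega⟩ := e.monotone (by simp [Fin.le_def]; omega)
        _ < cF j := hcF2 j
    have hcard : (Finset.univ.image cF).card ≤ hS'.toFinset.card := by
      apply Finset.card_le_card
      intro x hx
      simp only [Finset.mem_image, Finset.mem_univ, true_and] at hx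
      obtain ⟨i, rfl⟩ := hx
      simpa [Set.Finite.mem_toFinset, hS'def] using hcF1 i
    rw [Finset.card_image_of_injective _ hsm.injective, Finset.card_univ,
      Fintype.card_fin] at hcard
    rw [Set.ncard_eq_toFinset_card _ hS'] at hk
    omega
  have hfin : {t : ℝ | 0 < t ∧ g t = 0}.Finite := by
    by_contra h
    have hinf : {t : ℝ | 0 < t ∧ g t = 0}.Infinite := h
    obtain ⟨T, hTs, hTc⟩ := hinf.exists_subset_card_eq (k + 2)
    have := key T hTs
    omega
  refine ⟨hfin, ?_⟩
  rw [Set.ncard_eq_toFinset_card _ hfin]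
  exact key hfin.toFinset (by simp)

lemma key_lemma : ∀ n : ℕ, ∀ lam : Fin n → ℝ, StrictMono lam → ∀ c : Fin n → ℝ, c ≠ 0 →
    {t : ℝ | 0 < t ∧ ∑ j, c j * t ^ lam j = 0}.Finite ∧
    {t : ℝ | 0 < t ∧ ∑ j, c j * t ^ lam j = 0}.ncard ≤ n - 1 := by
  intro n
  induction n with
  | zero => intro lam _ c hc; exact absurd (Subsingleton.elim c 0) hc
  | succ n IH =>
    intro lam hlam c hc
    set μ : Fin (n + 1) → ℝ := fun j => lam j - lam 0 with hμ
    set g : ℝ → ℝ := fun t => ∑ j, c j * t ^ μ j with hgdef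
    have hset : {t : ℝ | 0 < t ∧ ∑ j, c j * t ^ lam j = 0} = {t : ℝ | 0 < t ∧ g t = 0} := by
      ext t
      simp only [Set.mem_setOf_eq, and_congr_right_iff]
      intro ht
      have hterm : ∀ j : Fin (n + 1), c j * t ^ lam j = t ^ lam 0 * (c j * t ^ μ j) := by
        intro j
        have : lam j = lam 0 + μ j := by simp [hμ]
        rw [this, Real.rpow_add ht]
        ring
      rw [hgdef]
      simp only
      rw [Finset.sum_congr rfl (fun j _ => hterm j), ← Finset.mul_sum]
      constructor
      · intro h
        rcases mul_eq_zero.1 h with h | h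
        · exact absurd h (Real.rpow_pos_of_pos ht _).ne'
        · exact h
      · intro h; rw [h, mul_zero]
    rw [hset]
    by_cases hzero : ∀ j : Fin n, c j.succ = 0
    · have hc0 : c 0 ≠ 0 := by
        intro h
        apply hc; funext j
        rcases Fin.eq_zero_or_eq_succ j with rfl | ⟨i, rfl⟩
        · exact h
        · exact hzero i
      have hempty : {t : ℝ | 0 < t ∧ g t = 0} = ∅ := by
        ext t
        simp only [Set.mem_setOf_eq, Set.mem_empty_iff_false, iff_false, not_and]
        intro ht hgt
        apply hc0
        have hgform : g t = c 0 * t ^ μ 0 := by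
          rw [hgdef]
          simp only
          rw [Fin.sum_univ_succ]
          simp [hzero]
        rw [hgform] at hgt
        have hμ0 : μ 0 = (0 : ℝ) := by simp [hμ]
        rw [hμ0, Real.rpow_zero, mul_one] at hgt
        exact hgt
      rw [hempty]
      simp
    · push_neg at hzero
      obtain ⟨j0, hj0⟩ := hzero
      have hnpos : 0 < n := j0.pos
      set c' : Fin n → ℝ := fun j => c j.succ * (lam j.succ - lam 0) with hc'
      set lam' : Fin n → ℝ := fun j => lam j.succ - lam 0 - 1 with hlam'
      have hlam'm : StrictMono lam' := by
        intro i j hij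
        have := hlam (Fin.succ_lt_succ_iff.2 hij)
        simp only [hlam']
        linarith
      have hc'ne : c' ≠ 0 := by
        intro h
        apply hj0
        have hj := congrFun h j0
        simp only [hc', Pi.zero_apply] at hj
        rcases mul_eq_zero.1 hj with h' | h'
        · exact h'
        · exfalso
          have := hlam (Fin.succ_pos j0)
          linarith
      obtain ⟨hfin', hcard'⟩ := IH lam' hlam'm c' hc'ne
      set G : ℝ → ℝ := fun t => ∑ j, c' j * t ^ lam' j with hGdef
      have hfinG : {t : ℝ | 0 < t ∧ G t = 0}.Finite := hfin'
      have hcardG : {t : ℝ | 0 < t ∧ G t = 0}.ncard ≤ n - 1 := hcard'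
      have hderiv : ∀ t : ℝ, 0 < t → HasDerivAt g (G t) t := by
        intro t ht
        have h1 : ∀ j : Fin (n + 1), HasDerivAt (fun s : ℝ => c j * s ^ μ j)
            (c j * (μ j * t ^ (μ j - 1))) t :=
          fun j => (Real.hasDerivAt_rpow_const (Or.inl ht.ne')).const_mul (c j)
        have h2 : HasDerivAt g (∑ j, c j * (μ j * t ^ (μ j - 1))) t := by
          rw [hgdef]
          exact HasDerivAt.fun_sum fun j _ => h1 j
        convert h2 using 1
        rw [hGdef]
        simp only
        rw [Fin.sum_univ_succ]
        have hμ0 : μ 0 = (0 : ℝ) := by simp [hμ]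
        rw [hμ0]
        simp only [zero_mul, mul_zero, zero_add]
        refine Finset.sum_congr rfl fun j _ => ?_
        simp only [hc', hlam', hμ]
        ring
      obtain ⟨hfin, hcard⟩ := rolle_count g G hderiv hfinG
      exact ⟨hfin, by omega⟩

/-- A nontrivial real linear combination `f t = Σ c_j t^{λ_j}` of powers
with distinct real exponents `λ_1 < … < λ_n` has at most `n - 1` zeros on `(0, ∞)`. -/
theorem stmt4 (n : ℕ) (lam : Fin n → ℝ) (hlam : StrictMono lam)
    (c : Fin n → ℝ) (hc : c ≠ 0) :
    {t : ℝ | 0 < t ∧ ∑ j, c j * t ^ lam j = 0}.Finite ∧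
    {t : ℝ | 0 < t ∧ ∑ j, c j * t ^ lam j = 0}.ncard ≤ n - 1 := by
  exact key_lemma n lam hlam c hc
end

section
/- Let P ∈ ℚ[t][y] be a polynomial of degree d = deg_y P ≥ 2 in y, and assume P and ∂P/∂y are coprime as polynomials in y over the field ℚ(t). Then there exist a nonzero polynomial Δ ∈ ℚ[t] and polynomials u_{j,k} ∈ ℚ[t] for 1 ≤ j ≤ d − 1, 0 ≤ k ≤ d − 1, such that for every open set U ⊆ ℂ and every differentiable function y : U → ℂ satisfying P(t, y(t)) = 0 for all t ∈ U, one has Δ(t) · (d/dt)(y(t)^j) = Σ_{k=0}^{d−1} u_{j,k}(t) · y(t)^k for every t ∈ U with Δ(t) ≠ 0 and every j ∈ {1, ..., d − 1}. -/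
/-- Evaluation of a polynomial in `y` with coefficients in `ℚ[t]` at `(τ, ξ) ∈ ℂ × ℂ`. -/
noncomputable def evalPoly2 (τ ξ : ℂ) (P : Polynomial (Polynomial ℚ)) : ℂ :=
  Polynomial.eval₂ (Polynomial.aeval τ : Polynomial ℚ →ₐ[ℚ] ℂ).toRingHom ξ P

open Polynomial

/-- Clearing denominators for a polynomial over the fraction field of `ℚ[t]`. -/
lemma clearDenom (p : Polynomial (FractionRing (Polynomial ℚ))) :
    ∃ (e : Polynomial ℚ) (q : Polynomial (Polynomial ℚ)), e ≠ 0 ∧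
      q.map (algebraMap (Polynomial ℚ) (FractionRing (Polynomial ℚ))) =
        Polynomial.C (algebraMap (Polynomial ℚ) (FractionRing (Polynomial ℚ)) e) * p := by
  obtain ⟨b, hb⟩ :=
    IsLocalization.integerNormalization_map_to_map (nonZeroDivisors (Polynomial ℚ)) p
  exact ⟨(b : Polynomial ℚ), IsLocalization.integerNormalization _ p,
    mem_nonZeroDivisors_iff_ne_zero.mp b.2, by
      rw [hb, Algebra.smul_def, Polynomial.algebraMap_apply]⟩

/-- Bezout identity with denominators cleared. -/
lemma bezoutStep (P : Polynomial (Polynomial ℚ))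
    (hcop : IsCoprime
      (P.map (algebraMap (Polynomial ℚ) (FractionRing (Polynomial ℚ))))
      ((Polynomial.derivative P).map
        (algebraMap (Polynomial ℚ) (FractionRing (Polynomial ℚ))))) :
    ∃ (δ : Polynomial ℚ) (a b : Polynomial (Polynomial ℚ)), δ ≠ 0 ∧
      a * P + b * Polynomial.derivative P = Polynomial.C δ := by
  set K := FractionRing (Polynomial ℚ)
  have hinj : Function.Injective (algebraMap (Polynomial ℚ) K) := IsFractionRing.injective _ _
  have hminj := Polynomial.map_injective (algebraMap (Polynomial ℚ) K) hinj
  obtain ⟨A, B, hAB⟩ := hcop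
  obtain ⟨eA, a0, heA, ha0⟩ := clearDenom A
  obtain ⟨eB, b0, heB, hb0⟩ := clearDenom B
  refine ⟨eA * eB, C eB * a0, C eA * b0, mul_ne_zero heA heB, ?_⟩
  apply hminj
  rw [Polynomial.map_add, Polynomial.map_mul, Polynomial.map_mul, Polynomial.map_mul,
    Polynomial.map_mul, Polynomial.map_C, Polynomial.map_C, Polynomial.map_C,
    ha0, hb0, map_mul]
  rw [show (C (algebraMap (Polynomial ℚ) K eB)) *
        (C (algebraMap (Polynomial ℚ) K eA) * A) * (P.map (algebraMap (Polynomial ℚ) K)) +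
      (C (algebraMap (Polynomial ℚ) K eA)) *
        (C (algebraMap (Polynomial ℚ) K eB) * B) *
          ((Polynomial.derivative P).map (algebraMap (Polynomial ℚ) K)) =
      C (algebraMap (Polynomial ℚ) K eA) * C (algebraMap (Polynomial ℚ) K eB) *
        (A * (P.map (algebraMap (Polynomial ℚ) K)) +
         B * ((Polynomial.derivative P).map (algebraMap (Polynomial ℚ) K))) from by ring,
    hAB, mul_one, ← C_mul]

/-- Division with remainder (degree `< d`) after clearing denominators. -/
lemma divStep (P F : Polynomial (Polynomial ℚ)) (d : ℕ) (hd : d = P.natDegree) (hd2 : 2 ≤ d) :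
    ∃ (e : Polynomial ℚ), e ≠ 0 ∧ ∃ (q r : Polynomial (Polynomial ℚ)),
      Polynomial.C e * F = q * P + r ∧ r.natDegree < d := by
  set K := FractionRing (Polynomial ℚ)
  have hinj : Function.Injective (algebraMap (Polynomial ℚ) K) := IsFractionRing.injective _ _
  have hminj := Polynomial.map_injective (algebraMap (Polynomial ℚ) K) hinj
  have hP0 : P ≠ 0 := by
    rintro rfl
    simp only [natDegree_zero] at hd
    omega
  set φ := algebraMap (Polynomial ℚ) K
  set Pb := P.map φ with hPbdef
  have hPb0 : Pb ≠ 0 := by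
    intro h
    exact hP0 (hminj (by simpa using h))
  set Fb := F.map φ with hFbdef
  have hmonic : (Pb * C Pb.leadingCoeff⁻¹).Monic := monic_mul_leadingCoeff_inv hPb0
  set Pm := Pb * C Pb.leadingCoeff⁻¹ with hPmdef
  have hdiv := Polynomial.modByMonic_add_div Fb Pm
  obtain ⟨e1, q1, he1, hq1⟩ := clearDenom (C Pb.leadingCoeff⁻¹ * (Fb /ₘ Pm))
  obtain ⟨e2, r2, he2, hr2⟩ := clearDenom (Fb %ₘ Pm)
  have hdegPb : Pb.degree = (d : WithBot ℕ) := by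
    rw [Polynomial.degree_map_eq_of_injective hinj, Polynomial.degree_eq_natDegree hP0, hd]
  refine ⟨e1 * e2, mul_ne_zero he1 he2, C e2 * q1, C e1 * r2, ?_, ?_⟩
  · apply hminj
    rw [Polynomial.map_mul, Polynomial.map_C, map_mul, Polynomial.map_add,
      Polynomial.map_mul, Polynomial.map_mul, Polynomial.map_mul, Polynomial.map_C,
      Polynomial.map_C, hq1, hr2]
    rw [C_mul]
    simp only [hPmdef] at hdiv
    linear_combination (-(C (φ e1) * C (φ e2))) * hdiv
  · by_cases hr0 : C e1 * r2 = 0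
    · rw [hr0]
      simpa using (by omega : 0 < d)
    · have hmapne : (C e1 * r2).map φ ≠ 0 := fun h => hr0 (hminj (by simpa using h))
      have hdeg2 : ((C e1 * r2).map φ).degree < (d : WithBot ℕ) := by
        rw [Polynomial.map_mul, Polynomial.map_C, hr2]
        calc (C (φ e1) * (C (φ e2) * (Fb %ₘ Pm))).degree
            ≤ (Fb %ₘ Pm).degree := by
              refine le_trans (degree_mul_le _ _) ?_
              refine le_trans (add_le_add degree_C_le (degree_mul_le _ _)) ?_
              simpa using le_trans (add_le_add degree_C_le le_rfl) (by simp)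
          _ < Pm.degree := Polynomial.degree_modByMonic_lt _ hmonic
          _ = (d : WithBot ℕ) := by
              rw [hPmdef, Polynomial.degree_mul_leadingCoeff_inv _ hPb0, hdegPb]
      have := (Polynomial.degree_map_eq_of_injective hinj (C e1 * r2)) ▸ hdeg2
      exact (Polynomial.natDegree_lt_iff_degree_lt hr0).mpr this

/-- The "t-derivative" of `P ∈ ℚ[t][y]`: differentiate each coefficient. -/
noncomputable def tDeriv (P : Polynomial (Polynomial ℚ)) : Polynomial (Polynomial ℚ) :=
  ∑ i ∈ Finset.range (P.natDegree + 1),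
    Polynomial.C (Polynomial.derivative (P.coeff i)) * Polynomial.X ^ i

lemma evalPoly2_tDeriv (t ξ : ℂ) (P : Polynomial (Polynomial ℚ)) :
    evalPoly2 t ξ (tDeriv P) = ∑ i ∈ Finset.range (P.natDegree + 1),
      (Polynomial.aeval t (Polynomial.derivative (P.coeff i)) : ℂ) * ξ ^ i := by
  unfold tDeriv evalPoly2
  rw [Polynomial.eval₂_finset_sum]
  refine Finset.sum_congr rfl fun i _ => ?_
  rw [Polynomial.eval₂_mul, Polynomial.eval₂_C, Polynomial.eval₂_X_pow]
  rfl

lemma evalPoly2_derivative (t ξ : ℂ) (P : Polynomial (Polynomial ℚ)) :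
    evalPoly2 t ξ (Polynomial.derivative P) =
      ∑ i ∈ Finset.range (P.natDegree + 1),
        (Polynomial.aeval t (P.coeff i) : ℂ) * ((i : ℂ) * ξ ^ (i - 1)) := by
  unfold evalPoly2
  set f := (Polynomial.aeval t : Polynomial ℚ →ₐ[ℚ] ℂ).toRingHom with hf
  have hdlt : (Polynomial.derivative P).natDegree < P.natDegree + 1 :=
    lt_of_le_of_lt (le_trans (Polynomial.natDegree_derivative_le P) (Nat.sub_le _ _))
      (lt_add_one _)
  rw [Polynomial.eval₂_eq_sum_range' f hdlt ξ, Finset.sum_range_succ, Finset.sum_range_succ']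
  have hlast : (Polynomial.derivative P).coeff P.natDegree = 0 := by
    rw [Polynomial.coeff_derivative,
      Polynomial.coeff_eq_zero_of_natDegree_lt (lt_add_one P.natDegree), zero_mul]
  rw [hlast, map_zero, zero_mul, add_zero]
  have h0 : (Polynomial.aeval t (P.coeff 0) : ℂ) * ((0 : ℕ) * ξ ^ (0 - 1)) = 0 := by
    simp
  rw [h0, add_zero]
  refine Finset.sum_congr rfl fun k _ => ?_
  rw [Polynomial.coeff_derivative, map_mul]
  have : f ((k : Polynomial ℚ) + 1) = (k : ℂ) + 1 := by
    simp
  rw [this]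
  have hk : ((k + 1 : ℕ) : ℂ) = (k : ℂ) + 1 := by push_cast; ring
  have hk1 : (k + 1) - 1 = k := rfl
  rw [hk1, hk]
  simp only [hf, AlgHom.toRingHom_eq_coe, AlgHom.coe_toRingHom]
  ring

/-- Chain rule for solutions: `∂ₜP(t,y) + ∂_yP(t,y)·y' = 0` on an open set. -/
lemma chainRule (P : Polynomial (Polynomial ℚ)) {U : Set ℂ} (hU : IsOpen U) {y : ℂ → ℂ}
    (hy : ∀ t ∈ U, DifferentiableAt ℂ y t)
    (hsol : ∀ t ∈ U, evalPoly2 t (y t) P = 0) {t : ℂ} (ht : t ∈ U) :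
    evalPoly2 t (y t) (tDeriv P)
      + evalPoly2 t (y t) (Polynomial.derivative P) * deriv y t = 0 := by
  set n := P.natDegree
  have hfun : (fun s => evalPoly2 s (y s) P)
      = fun s => ∑ i ∈ Finset.range (n + 1), (Polynomial.aeval s (P.coeff i) : ℂ) * y s ^ i := by
    funext s
    exact Polynomial.eval₂_eq_sum_range' _ (lt_add_one _) _
  have hD : HasDerivAt (fun s => evalPoly2 s (y s) P)
      (∑ i ∈ Finset.range (n + 1),
        ((Polynomial.aeval t (Polynomial.derivative (P.coeff i)) : ℂ) * y t ^ i
          + (Polynomial.aeval t (P.coeff i) : ℂ) * ((i : ℂ) * y t ^ (i - 1) * deriv y t))) t := by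
    rw [hfun]
    exact HasDerivAt.fun_sum fun i _ =>
      (Polynomial.hasDerivAt_aeval (P.coeff i) t).mul (((hy t ht).hasDerivAt).pow i)
  have hzero : deriv (fun s => evalPoly2 s (y s) P) t = 0 := by
    have hev : (fun s => evalPoly2 s (y s) P) =ᶠ[nhds t] (fun _ => (0 : ℂ)) :=
      Filter.eventuallyEq_of_mem (hU.mem_nhds ht) hsol
    rw [hev.deriv_eq]
    exact deriv_const _ _
  have hDz := hD.deriv
  rw [hzero] at hDz
  have hsplit : (0 : ℂ) = ∑ i ∈ Finset.range (n + 1),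
        (Polynomial.aeval t (Polynomial.derivative (P.coeff i)) : ℂ) * y t ^ i
      + (∑ i ∈ Finset.range (n + 1),
        (Polynomial.aeval t (P.coeff i) : ℂ) * ((i : ℂ) * y t ^ (i - 1))) * deriv y t := by
    rw [hDz, Finset.sum_add_distrib, Finset.sum_mul]
    congr 1
    refine Finset.sum_congr rfl fun i _ => by ring
  rw [evalPoly2_tDeriv, evalPoly2_derivative]
  exact hsplit.symm

/-- if `P ∈ ℚ[t][y]` has `d = deg_y P ≥ 2` and `P`, `∂P/∂y` are coprime
over `ℚ(t)`, then there are `0 ≠ Δ ∈ ℚ[t]` and `u_{j,k} ∈ ℚ[t]` such that any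
differentiable solution `y(t)` of `P(t, y(t)) = 0` on an open set satisfies
`Δ(t)·(y(t)^j)' = Σ_{k<d} u_{j,k}(t)·y(t)^k` (for `1 ≤ j ≤ d - 1`) wherever
`Δ(t) ≠ 0`. -/
theorem stmt12 (P : Polynomial (Polynomial ℚ)) (d : ℕ) (hd : d = P.natDegree)
    (hd2 : 2 ≤ d)
    (hcop : IsCoprime
      (P.map (algebraMap (Polynomial ℚ) (FractionRing (Polynomial ℚ))))
      ((Polynomial.derivative P).map
        (algebraMap (Polynomial ℚ) (FractionRing (Polynomial ℚ))))) :
    ∃ Δ : Polynomial ℚ, Δ ≠ 0 ∧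
    ∃ u : ℕ → ℕ → Polynomial ℚ,
      ∀ (U : Set ℂ), IsOpen U → ∀ y : ℂ → ℂ,
        (∀ t ∈ U, DifferentiableAt ℂ y t) →
        (∀ t ∈ U, evalPoly2 t (y t) P = 0) →
        ∀ t ∈ U, (Polynomial.aeval t Δ : ℂ) ≠ 0 →
          ∀ j : ℕ, 1 ≤ j → j ≤ d - 1 →
            (Polynomial.aeval t Δ : ℂ) * deriv (fun s => y s ^ j) t
              = ∑ k ∈ Finset.range d, (Polynomial.aeval t (u j k) : ℂ) * y t ^ k := by
  classical
  obtain ⟨δ, a, b, hδ, hbez⟩ := bezoutStep P hcop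
  have hdivall : ∀ j : ℕ, ∃ (e : Polynomial ℚ), e ≠ 0 ∧ ∃ (q r : Polynomial (Polynomial ℚ)),
      Polynomial.C e * ((j : Polynomial (Polynomial ℚ)) * X ^ (j - 1) * b * tDeriv P)
        = q * P + r ∧ r.natDegree < d :=
    fun j => divStep P _ d hd hd2
  choose e he q r hqr hr using hdivall
  refine ⟨δ * ∏ i ∈ Finset.range d, e i,
    mul_ne_zero hδ (Finset.prod_ne_zero_iff.mpr fun i _ => he i),
    fun j k => -((∏ i ∈ (Finset.range d).erase j, e i) * (r j).coeff k), ?_⟩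
  intro U hU y hy hsol t ht hΔ j hj1 hjd
  set Y := y t with hY
  have hevmul : ∀ A B : Polynomial (Polynomial ℚ),
      evalPoly2 t Y (A * B) = evalPoly2 t Y A * evalPoly2 t Y B :=
    fun A B => Polynomial.eval₂_mul _ _
  have hevadd : ∀ A B : Polynomial (Polynomial ℚ),
      evalPoly2 t Y (A + B) = evalPoly2 t Y A + evalPoly2 t Y B :=
    fun A B => Polynomial.eval₂_add _ _
  have hevC : ∀ c : Polynomial ℚ, evalPoly2 t Y (Polynomial.C c) = Polynomial.aeval t c :=
    fun c => Polynomial.eval₂_C _ _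
  have hP0 : evalPoly2 t Y P = 0 := hsol t ht
  have hchain := chainRule P hU hy hsol ht
  rw [← hY] at hchain
  -- Bezout evaluated
  have hbez' : evalPoly2 t Y b * evalPoly2 t Y (Polynomial.derivative P)
      = (Polynomial.aeval t δ : ℂ) := by
    have := congrArg (evalPoly2 t Y) hbez
    rw [hevadd, hevmul, hevmul, hevC, hP0, mul_zero, zero_add] at this
    exact this
  -- division evaluated
  have hFj : evalPoly2 t Y ((j : Polynomial (Polynomial ℚ)) * X ^ (j - 1) * b * tDeriv P)
      = (j : ℂ) * Y ^ (j - 1) * evalPoly2 t Y b * evalPoly2 t Y (tDeriv P) := by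
    unfold evalPoly2
    rw [Polynomial.eval₂_mul, Polynomial.eval₂_mul, Polynomial.eval₂_mul,
      Polynomial.eval₂_natCast, Polynomial.eval₂_X_pow]
  have hdivj : (Polynomial.aeval t (e j) : ℂ)
        * ((j : ℂ) * Y ^ (j - 1) * evalPoly2 t Y b * evalPoly2 t Y (tDeriv P))
      = evalPoly2 t Y (r j) := by
    have := congrArg (evalPoly2 t Y) (hqr j)
    rw [hevmul, hevC, hFj, hevadd, hevmul, hP0, mul_zero, zero_add] at this
    exact this
  -- derivative of y^j
  have hyd : deriv (fun s => y s ^ j) t = (j : ℂ) * Y ^ (j - 1) * deriv y t :=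
    (((hy t ht).hasDerivAt).pow j).deriv
  -- split the product Δ
  have hjmem : j ∈ Finset.range d := Finset.mem_range.mpr (by omega)
  have hprod : ∏ i ∈ Finset.range d, e i
      = e j * ∏ i ∈ (Finset.range d).erase j, e i :=
    (Finset.mul_prod_erase _ _ hjmem).symm
  -- rewrite RHS
  have hRHS : ∑ k ∈ Finset.range d,
        (Polynomial.aeval t (-((∏ i ∈ (Finset.range d).erase j, e i) * (r j).coeff k)) : ℂ)
          * Y ^ k
      = -(Polynomial.aeval t (∏ i ∈ (Finset.range d).erase j, e i) : ℂ)
          * evalPoly2 t Y (r j) := by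
    have hev : evalPoly2 t Y (r j)
        = ∑ k ∈ Finset.range d, (Polynomial.aeval t ((r j).coeff k) : ℂ) * Y ^ k :=
      Polynomial.eval₂_eq_sum_range' _ (hr j) _
    rw [hev, Finset.mul_sum]
    refine Finset.sum_congr rfl fun k _ => ?_
    rw [map_neg, map_mul]
    ring
  rw [hyd, hprod, hRHS, map_mul, map_mul]
  set EJ := (Polynomial.aeval t (∏ i ∈ (Finset.range d).erase j, e i) : ℂ)
  set EJ2 := (Polynomial.aeval t (e j) : ℂ)
  set D := (Polynomial.aeval t δ : ℂ)
  -- final algebra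
  linear_combination (-(EJ2 * EJ * (j : ℂ) * Y ^ (j - 1) * deriv y t)) * hbez'
    + (EJ2 * EJ * (j : ℂ) * Y ^ (j - 1) * evalPoly2 t Y b) * hchain
    + (-EJ) * hdivj
end
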